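/- Let $\vec w = (w_1, \ldots, w_m)$ be weights on $\mathbb{R}^n$ with $w_i^{1/m} \in A_1$ for each $i$, and let $v_{\vec w} = \prod_{i=1}^m w_i^{1/m}$. Then $\vec w \in A_{(1,\ldots,1)}$ with $[\vec w]_{A_{(1,\ldots,1)}} \le [v_{\vec w}]_{A_m}^{m} \prod_{i=1}^m [w_i^{1/m}]_{A_1}^{m}$, provided $v_{\vec w} \in A_m$. -/

import Mathlib

open MeasureTheory ENNReal Set Filter

noncomputable section

abbrev Rn (n : ℕ) := EuclideanSpace ℝ (Fin n)

def cube {n : ℕ} (c : Rn n) (r : ℝ) : Set (Rn n) := {x | ∀ i, |x i - c i| ≤ r / 2}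

def A1Bound {n : ℕ} (w : Rn n → ℝ) (C : ℝ) : Prop :=
  ∀ (c : Rn n) (r : ℝ), 0 < r →
    ∫ x in cube c r, w x ≤
      C * (volume (cube c r)).toReal * essInf w (volume.restrict (cube c r))

def MultiA1Bound {n m : ℕ} (w : Fin m → Rn n → ℝ) (C : ℝ) : Prop :=
  ∀ (c : Rn n) (r : ℝ), 0 < r →
    ((∫ x in cube c r, ∏ i, w i x ^ ((1 : ℝ) / m)) / (volume (cube c r)).toReal) ^ m ≤
      C * ∏ i, essInf (w i) (volume.restrict (cube c r))

def ApBound {n : ℕ} (p : ℕ) (v : Rn n → ℝ) (C : ℝ) : Prop :=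
  if p = 1 then A1Bound v C
  else
    ∀ (c : Rn n) (r : ℝ), 0 < r →
      ((∫ x in cube c r, v x) / (volume (cube c r)).toReal) *
          ((∫ x in cube c r, v x ^ (1 - (p : ℝ) / ((p : ℝ) - 1))) /
              (volume (cube c r)).toReal) ^ (p - 1) ≤ C

section AuxLemmas

lemma le_essInf_of_ae_le' {α : Type*} {mα : MeasurableSpace α} {μ : Measure α} (hμ : μ ≠ 0)
    {f : α → ℝ} {c : ℝ} (h : ∀ᵐ x ∂μ, c ≤ f x) : c ≤ essInf f μ := by
  rw [essInf_eq_sSup]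
  have hmem : c ∈ {a : ℝ | μ {x | f x < a} = 0} := by
    have h' := h
    rw [ae_iff] at h'
    simpa [not_le] using h'
  refine le_csSup ?_ hmem
  obtain ⟨k, hk⟩ : ∃ k : ℕ, μ {x | f x < (k : ℝ)} ≠ 0 := by
    by_contra hno
    push_neg at hno
    have h0 : μ (⋃ k : ℕ, {x | f x < (k : ℝ)}) = 0 :=
      measure_iUnion_null fun k => by simpa using hno k
    have huniv : (⋃ k : ℕ, {x | f x < (k : ℝ)}) = Set.univ := by
      ext x
      simpa using exists_nat_gt (f x)
    rw [huniv] at h0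
    exact hμ (Measure.measure_univ_eq_zero.mp h0)
  refine ⟨(k : ℝ), fun a ha => ?_⟩
  by_contra hlt
  push_neg at hlt
  exact hk (measure_mono_null (fun x (hx : f x < _) => lt_trans hx hlt) ha)

lemma cube_eq_preimage {n : ℕ} (c : Rn n) (r : ℝ) :
    cube c r = ((MeasurableEquiv.toLp 2 (Fin n → ℝ)).symm) ⁻¹'
      (Set.univ.pi fun i => Icc (c i - r / 2) (c i + r / 2)) := by
  ext x
  simp only [cube, mem_setOf_eq, mem_preimage, Set.mem_pi, Set.mem_univ, true_implies, mem_Icc]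
  refine forall_congr' fun i => ?_
  rw [abs_sub_le_iff]
  constructor
  · rintro ⟨h1, h2⟩
    constructor
    · show c i - r / 2 ≤ x i
      linarith
    · show x i ≤ c i + r / 2
      linarith
  · rintro ⟨h1, h2⟩
    have h1' : c i - r / 2 ≤ x i := h1
    have h2' : x i ≤ c i + r / 2 := h2
    exact ⟨by linarith, by linarith⟩

lemma volume_cube {n : ℕ} (c : Rn n) (r : ℝ) : volume (cube c r) = ENNReal.ofReal r ^ n := by
  rw [cube_eq_preimage,
    (EuclideanSpace.volume_preserving_symm_measurableEquiv_toLp (Fin n)).measure_preimage_equiv,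
    volume_pi_pi]
  have : ∀ i : Fin n, volume (Icc (c i - r / 2) (c i + r / 2)) = ENNReal.ofReal r := by
    intro i
    rw [Real.volume_Icc]
    ring_nf
  simp [this]

lemma isCompact_cube {n : ℕ} (c : Rn n) (r : ℝ) : IsCompact (cube c r) := by
  rw [cube_eq_preimage]
  rw [show ⇑((MeasurableEquiv.toLp 2 (Fin n → ℝ)).symm) =
      ⇑((MeasurableEquiv.toLp 2 (Fin n → ℝ)).symm).toEquiv from rfl,
    ← Equiv.image_symm_eq_preimage]
  refine (isCompact_univ_pi fun i => isCompact_Icc).image ?_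
  have : ⇑((MeasurableEquiv.toLp 2 (Fin n → ℝ)).symm).toEquiv.symm =
      ⇑(PiLp.continuousLinearEquiv 2 ℝ (fun _ : Fin n => ℝ)).symm := rfl
  rw [this]
  exact (PiLp.continuousLinearEquiv 2 ℝ (fun _ : Fin n => ℝ)).symm.continuous

end AuxLemmas

/-- If `wᵢ^{1/m} ∈ A₁` for each `i` and `v_{w⃗} = ∏ᵢ wᵢ^{1/m} ∈ A_m`, then
`w⃗ ∈ A_{(1,…,1)}` with `[w⃗] ≤ [v_{w⃗}]_{A_m}^m ∏ᵢ [wᵢ^{1/m}]_{A₁}^m`. -/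
theorem stmt8 {n m : ℕ} (hm : 1 ≤ m) (w : Fin m → Rn n → ℝ) (Cv : ℝ) (Ci : Fin m → ℝ)
    (hw : ∀ i, LocallyIntegrable (w i) volume) (hpos : ∀ i, ∀ᵐ x, 0 < w i x)
    (hCv : 0 ≤ Cv) (hCi : ∀ i, 0 ≤ Ci i)
    (hA1 : ∀ i, A1Bound (fun x => w i x ^ ((1 : ℝ) / m)) (Ci i))
    (hAm : ApBound m (fun x => ∏ i, w i x ^ ((1 : ℝ) / m)) Cv) :
    MultiA1Bound w (Cv ^ m * ∏ i, Ci i ^ m) := by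
  intro c r hr
  have hm' : (1 : ℝ) ≤ (m : ℝ) := by exact_mod_cast hm
  have hmne : (m : ℝ) ≠ 0 := by positivity
  -- basic facts about the cube
  have hQc : IsCompact (cube c r) := isCompact_cube c r
  have hVolne : volume (cube c r) ≠ 0 := by
    rw [volume_cube]
    exact pow_ne_zero _ (ENNReal.ofReal_pos.mpr hr).ne'
  have hVolfin : volume (cube c r) ≠ ⊤ := by
    rw [volume_cube]
    exact ENNReal.pow_ne_top ENNReal.ofReal_ne_top
  set μ : Measure (Rn n) := volume.restrict (cube c r) with hμdef
  set V : ℝ := (volume (cube c r)).toReal with hVdef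
  have hV : 0 < V := ENNReal.toReal_pos hVolne hVolfin
  have hμuniv : μ Set.univ = volume (cube c r) := Measure.restrict_apply_univ _
  have hμne : μ ≠ 0 := by
    intro h0
    rw [h0] at hμuniv
    exact hVolne (by simpa using hμuniv.symm)
  haveI hμfin : IsFiniteMeasure μ :=
    ⟨by rw [hμuniv]; exact lt_of_le_of_ne le_top hVolfin⟩
  -- measurability
  have hwm : ∀ i, AEMeasurable (w i) μ := fun i =>
    ((hw i).aestronglyMeasurable.aemeasurable).restrict
  have hgm : ∀ i, AEMeasurable (fun x => w i x ^ ((1 : ℝ) / m)) μ := fun i =>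
    (Real.continuous_rpow_const (by positivity)).measurable.comp_aemeasurable (hwm i)
  have hvm : AEMeasurable (fun x => ∏ i, w i x ^ ((1 : ℝ) / m)) μ :=
    Finset.aemeasurable_fun_prod _ fun i _ => hgm i
  -- a.e. positivity
  have hallpos : ∀ᵐ x ∂μ, ∀ i, 0 < w i x :=
    ae_restrict_of_ae (ae_all_iff.mpr hpos)
  have hgpos : ∀ i, ∀ᵐ x ∂μ, 0 < w i x ^ ((1 : ℝ) / m) := fun i =>
    hallpos.mono fun x hx => Real.rpow_pos_of_pos (hx i) _
  have hvpos : ∀ᵐ x ∂μ, 0 < ∏ i, w i x ^ ((1 : ℝ) / m) :=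
    hallpos.mono fun x hx => Finset.prod_pos fun i _ => Real.rpow_pos_of_pos (hx i) _
  -- integrability
  have hwint : ∀ i, Integrable (w i) μ := fun i => (hw i).integrableOn_isCompact hQc
  have hgint : ∀ i, Integrable (fun x => w i x ^ ((1 : ℝ) / m)) μ := by
    intro i
    refine Integrable.mono' ((integrable_const (1 : ℝ)).add (hwint i))
      (hgm i).aestronglyMeasurable ?_
    filter_upwards [hallpos] with x hx
    rw [Real.norm_eq_abs, abs_of_pos (Real.rpow_pos_of_pos (hx i) _)]
    rcases le_total (w i x) 1 with h | h
    · have h1 : w i x ^ ((1 : ℝ) / m) ≤ 1 := Real.rpow_le_one (hx i).le h (by positivity)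
      have h2 : (0 : ℝ) < w i x := hx i
      simp only [Pi.add_apply]
      linarith
    · have h1 : w i x ^ ((1 : ℝ) / m) ≤ w i x ^ (1 : ℝ) :=
        Real.rpow_le_rpow_of_exponent_le h (by rw [div_le_one (by positivity)]; exact hm')
      rw [Real.rpow_one] at h1
      simp only [Pi.add_apply]
      linarith
  have hvint : Integrable (fun x => ∏ i, w i x ^ ((1 : ℝ) / m)) μ := by
    refine Integrable.mono'
      (integrable_finset_sum Finset.univ fun i _ => ((hwint i).const_mul ((1 : ℝ) / m)))
      hvm.aestronglyMeasurable ?_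
    filter_upwards [hallpos] with x hx
    rw [Real.norm_eq_abs, abs_of_nonneg (Finset.prod_nonneg fun i _ =>
      (Real.rpow_pos_of_pos (hx i) _).le)]
    exact Real.geom_mean_le_arith_mean_weighted Finset.univ (fun _ => (1 : ℝ) / m)
      (fun i => w i x) (fun i _ => by positivity)
      (by rw [Finset.sum_const, Finset.card_univ, Fintype.card_fin, nsmul_eq_mul]; field_simp)
      (fun i _ => (hx i).le)
  -- positivity of integrals
  have hIgpos : ∀ i, 0 < ∫ x in cube c r, w i x ^ ((1 : ℝ) / m) := by
    intro i
    rw [integral_pos_iff_support_of_nonneg_ae ((hgpos i).mono fun x h => h.le) (hgint i)]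
    calc (0 : ℝ≥0∞) < μ Set.univ := by
          rw [hμuniv]; exact hVolne.bot_lt
      _ ≤ μ (Function.support fun x => w i x ^ ((1 : ℝ) / m)) := by
          refine measure_mono_ae ?_
          filter_upwards [hgpos i] with x hx _
          exact ne_of_gt hx
  -- essInf facts
  have hbdd : ∀ i, IsBoundedUnder (· ≥ ·) (ae μ) (fun x => w i x ^ ((1 : ℝ) / m)) := fun i =>
    ⟨0, eventually_map.mpr ((hgpos i).mono fun x hx => hx.le)⟩
  have hEa : ∀ i, ∀ᵐ x ∂μ,
      essInf (fun x => w i x ^ ((1 : ℝ) / m)) μ ≤ w i x ^ ((1 : ℝ) / m) := fun i =>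
    ae_essInf_le (hbdd i)
  have hA1' : ∀ i, (∫ x in cube c r, w i x ^ ((1 : ℝ) / m)) ≤
      Ci i * V * essInf (fun x => w i x ^ ((1 : ℝ) / m)) μ := fun i => hA1 i c r hr
  have hEpos : ∀ i, 0 < essInf (fun x => w i x ^ ((1 : ℝ) / m)) μ := by
    intro i
    by_contra hcon
    push_neg at hcon
    nlinarith [hIgpos i, hA1' i, mul_nonneg (hCi i) hV.le]
  have hEw : ∀ i, (essInf (fun x => w i x ^ ((1 : ℝ) / m)) μ) ^ m ≤ essInf (w i) μ := by
    intro i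
    refine le_essInf_of_ae_le' hμne ?_
    filter_upwards [hEa i, hallpos] with x hle hx
    have hxe : (w i x ^ ((1 : ℝ) / m)) ^ m = w i x := by
      rw [← Real.rpow_natCast (w i x ^ ((1 : ℝ) / m)) m, ← Real.rpow_mul (hx i).le]
      rw [show (1 : ℝ) / m * m = 1 by field_simp]
      exact Real.rpow_one _
    calc (essInf (fun x => w i x ^ ((1 : ℝ) / m)) μ) ^ m
        ≤ (w i x ^ ((1 : ℝ) / m)) ^ m := pow_le_pow_left₀ (hEpos i).le hle m
      _ = w i x := hxe
  -- THE KEY INEQUALITY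
  have hKEY : (∫ x in cube c r, ∏ i, w i x ^ ((1 : ℝ) / m)) / V ≤
      Cv * ∏ i, (∫ x in cube c r, w i x ^ ((1 : ℝ) / m)) / V := by
    rcases eq_or_lt_of_le hm with hm1 | hm2
    · -- the case m = 1
      subst hm1
      have hAmRaw : (∫ x in cube c r, ∏ i : Fin 1, w i x ^ ((1 : ℝ) / (1 : ℕ))) ≤
          Cv * V * essInf (fun x => ∏ i : Fin 1, w i x ^ ((1 : ℝ) / (1 : ℕ))) μ := by
        have h := hAm
        simp only [ApBound, if_pos] at h
        exact h c r hr
      have hveq : (fun x : Rn n => ∏ i : Fin 1, w i x ^ ((1 : ℝ) / (1 : ℕ))) =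
          fun x => w 0 x ^ ((1 : ℝ) / (1 : ℕ)) := by
        funext x
        exact Fin.prod_univ_one _
      rw [hveq] at hAmRaw
      have hgeavg : essInf (fun x => w 0 x ^ ((1 : ℝ) / (1 : ℕ))) μ * V ≤
          ∫ x in cube c r, w 0 x ^ ((1 : ℝ) / (1 : ℕ)) := by
        have hint := integral_mono_ae
          (integrable_const (essInf (fun x => w 0 x ^ ((1 : ℝ) / (1 : ℕ))) μ))
          (hgint 0) (hEa 0)
        rw [integral_const, measureReal_def, hμuniv, smul_eq_mul, mul_comm] at hint
        exact hint
      have h2 : (∫ x in cube c r, ∏ i : Fin 1, w i x ^ ((1 : ℝ) / (1 : ℕ))) ≤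
          Cv * ∫ x in cube c r, w 0 x ^ ((1 : ℝ) / (1 : ℕ)) := by
        rw [hveq]
        calc (∫ x in cube c r, w 0 x ^ ((1 : ℝ) / (1 : ℕ)))
            ≤ Cv * V * essInf (fun x => w 0 x ^ ((1 : ℝ) / (1 : ℕ))) μ := hAmRaw
          _ = Cv * (essInf (fun x => w 0 x ^ ((1 : ℝ) / (1 : ℕ))) μ * V) := by ring
          _ ≤ Cv * ∫ x in cube c r, w 0 x ^ ((1 : ℝ) / (1 : ℕ)) :=
              mul_le_mul_of_nonneg_left hgeavg hCv
      rw [show (∏ i : Fin 1, (∫ x in cube c r, w i x ^ ((1 : ℝ) / (1 : ℕ))) / V) =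
          (∫ x in cube c r, w 0 x ^ ((1 : ℝ) / (1 : ℕ))) / V from Fin.prod_univ_one _]
      rw [← mul_div_assoc]
      exact div_le_div_of_nonneg_right h2 hV.le
    · -- the case 2 ≤ m
      have hmne1 : m ≠ 1 := by omega
      have hm2' : (1 : ℝ) < (m : ℝ) := by exact_mod_cast hm2
      have hm1R : (0 : ℝ) < (m : ℝ) - 1 := by linarith
      have hm1Rne : (m : ℝ) - 1 ≠ 0 := hm1R.ne'
      have hq : (0 : ℝ) < 2 * (m : ℝ) - 1 := by linarith
      have hqne : 2 * (m : ℝ) - 1 ≠ 0 := hq.ne'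
      have hpn : (0 : ℝ) < ((m : ℝ) - 1) / (2 * (m : ℝ) - 1) := by positivity
      have haa : (0 : ℝ) < 1 / (2 * (m : ℝ) - 1) := by positivity
      have hs_neg : (1 - (m : ℝ) / ((m : ℝ) - 1)) < 0 := by
        rw [sub_neg, lt_div_iff₀ hm1R]
        linarith
      have hAmRaw : ((∫ x in cube c r, ∏ i, w i x ^ ((1 : ℝ) / m)) / V) *
          ((∫ x in cube c r, (∏ i, w i x ^ ((1 : ℝ) / m)) ^ (1 - (m : ℝ) / ((m : ℝ) - 1))) / V)
            ^ (m - 1) ≤ Cv := by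
        have h := hAm
        simp only [ApBound, if_neg hmne1] at h
        exact h c r hr
      -- facts about the negative power h
      have hEprodpos : 0 < ∏ i, essInf (fun x => w i x ^ ((1 : ℝ) / m)) μ :=
        Finset.prod_pos fun i _ => hEpos i
      have hvgeE : ∀ᵐ x ∂μ, (∏ i, essInf (fun x => w i x ^ ((1 : ℝ) / m)) μ) ≤
          ∏ i, w i x ^ ((1 : ℝ) / m) := by
        filter_upwards [ae_all_iff.mpr hEa] with x hx
        exact Finset.prod_le_prod (fun i _ => (hEpos i).le) (fun i _ => hx i)
      have hhm : AEMeasurable (fun x => (∏ i, w i x ^ ((1 : ℝ) / m))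
          ^ (1 - (m : ℝ) / ((m : ℝ) - 1))) μ := by
        refine AEMeasurable.congr (Real.measurable_exp.comp_aemeasurable
          ((Real.measurable_log.comp_aemeasurable hvm).mul_const
            (1 - (m : ℝ) / ((m : ℝ) - 1)))) ?_
        filter_upwards [hvpos] with x hx
        exact (Real.rpow_def_of_pos hx _).symm
      have hhpos : ∀ᵐ x ∂μ, 0 < (∏ i, w i x ^ ((1 : ℝ) / m))
          ^ (1 - (m : ℝ) / ((m : ℝ) - 1)) :=
        hvpos.mono fun x hx => Real.rpow_pos_of_pos hx _
      have hhle : ∀ᵐ x ∂μ, (∏ i, w i x ^ ((1 : ℝ) / m)) ^ (1 - (m : ℝ) / ((m : ℝ) - 1)) ≤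
          (∏ i, essInf (fun x => w i x ^ ((1 : ℝ) / m)) μ) ^ (1 - (m : ℝ) / ((m : ℝ) - 1)) :=
        hvgeE.mono fun x hx => Real.rpow_le_rpow_of_nonpos hEprodpos hx hs_neg.le
      have hhint : Integrable (fun x => (∏ i, w i x ^ ((1 : ℝ) / m))
          ^ (1 - (m : ℝ) / ((m : ℝ) - 1))) μ := by
        refine Integrable.mono' (integrable_const
          ((∏ i, essInf (fun x => w i x ^ ((1 : ℝ) / m)) μ)
            ^ (1 - (m : ℝ) / ((m : ℝ) - 1)))) hhm.aestronglyMeasurable ?_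
        filter_upwards [hhpos, hhle] with x h1 h2
        rw [Real.norm_eq_abs, abs_of_pos h1]
        exact h2
      have hIhpos : 0 < ∫ x in cube c r,
          (∏ i, w i x ^ ((1 : ℝ) / m)) ^ (1 - (m : ℝ) / ((m : ℝ) - 1)) := by
        rw [integral_pos_iff_support_of_nonneg_ae (hhpos.mono fun x h => h.le) hhint]
        calc (0 : ℝ≥0∞) < μ Set.univ := by rw [hμuniv]; exact hVolne.bot_lt
          _ ≤ μ (Function.support fun x => (∏ i, w i x ^ ((1 : ℝ) / m))
              ^ (1 - (m : ℝ) / ((m : ℝ) - 1))) := by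
            refine measure_mono_ae ?_
            filter_upwards [hhpos] with x hx _
            exact ne_of_gt hx
      -- Hoelder's inequality
      have hHolder := ENNReal.lintegral_prod_norm_pow_le (μ := μ) Finset.univ
        (f := fun (o : Option (Fin m)) (x : Rn n) => ENNReal.ofReal (Option.elim o
          (fun y => (∏ i, w i y ^ ((1 : ℝ) / m)) ^ (1 - (m : ℝ) / ((m : ℝ) - 1)))
          (fun i y => w i y ^ ((1 : ℝ) / m)) x))
        (p := fun o : Option (Fin m) => Option.elim o (((m : ℝ) - 1) / (2 * (m : ℝ) - 1))
          (fun _ => 1 / (2 * (m : ℝ) - 1)))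
        (fun o _ => by
          cases o with
          | none => exact ENNReal.measurable_ofReal.comp_aemeasurable hhm
          | some i => exact ENNReal.measurable_ofReal.comp_aemeasurable (hgm i))
        (by
          rw [Fintype.sum_option]
          simp only [Option.elim]
          rw [Finset.sum_const, Finset.card_univ, Fintype.card_fin, nsmul_eq_mul]
          rw [mul_one_div, ← add_div, div_eq_one_iff_eq hqne]
          ring)
        (fun o _ => by
          cases o with
          | none => exact hpn.le
          | some i => exact haa.le)
      have hENN : μ Set.univ ≤ ENNReal.ofReal
          ((∫ x in cube c r, (∏ i, w i x ^ ((1 : ℝ) / m))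
              ^ (1 - (m : ℝ) / ((m : ℝ) - 1))) ^ (((m : ℝ) - 1) / (2 * (m : ℝ) - 1)) *
            ∏ i, (∫ x in cube c r, w i x ^ ((1 : ℝ) / m)) ^ (1 / (2 * (m : ℝ) - 1))) := by
        calc μ Set.univ = ∫⁻ _, (1 : ℝ≥0∞) ∂μ := lintegral_one.symm
          _ = ∫⁻ x, ∏ o : Option (Fin m), (ENNReal.ofReal (Option.elim o
              (fun y => (∏ i, w i y ^ ((1 : ℝ) / m)) ^ (1 - (m : ℝ) / ((m : ℝ) - 1)))
              (fun i y => w i y ^ ((1 : ℝ) / m)) x)) ^ (Option.elim o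
                (((m : ℝ) - 1) / (2 * (m : ℝ) - 1))
                (fun _ => 1 / (2 * (m : ℝ) - 1))) ∂μ := by
              refine (lintegral_congr_ae ?_).symm
              filter_upwards [hallpos] with x hx
              have hgx : ∀ i, (0 : ℝ) < w i x ^ ((1 : ℝ) / m) := fun i =>
                Real.rpow_pos_of_pos (hx i) _
              have hvx : (0 : ℝ) < ∏ i, w i x ^ ((1 : ℝ) / m) :=
                Finset.prod_pos fun i _ => hgx i
              rw [Fintype.prod_option]
              simp only [Option.elim]
              rw [ENNReal.ofReal_rpow_of_pos (Real.rpow_pos_of_pos hvx _)]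
              rw [Finset.prod_congr rfl fun i _ => ENNReal.ofReal_rpow_of_pos (hgx i)]
              rw [← ENNReal.ofReal_prod_of_nonneg
                (fun i _ => Real.rpow_nonneg (hgx i).le _)]
              rw [← ENNReal.ofReal_mul
                (Real.rpow_nonneg (Real.rpow_pos_of_pos hvx _).le _)]
              rw [Real.finset_prod_rpow Finset.univ _ (fun i _ => (hgx i).le) _]
              rw [← Real.rpow_mul hvx.le]
              rw [← Real.rpow_add hvx]
              rw [show (1 - (m : ℝ) / ((m : ℝ) - 1)) * (((m : ℝ) - 1) / (2 * (m : ℝ) - 1)) +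
                  1 / (2 * (m : ℝ) - 1) = 0 by field_simp; ring]
              rw [Real.rpow_zero, ENNReal.ofReal_one]
          _ ≤ ∏ o : Option (Fin m), (∫⁻ x, ENNReal.ofReal (Option.elim o
              (fun y => (∏ i, w i y ^ ((1 : ℝ) / m)) ^ (1 - (m : ℝ) / ((m : ℝ) - 1)))
              (fun i y => w i y ^ ((1 : ℝ) / m)) x) ∂μ) ^ (Option.elim o
                (((m : ℝ) - 1) / (2 * (m : ℝ) - 1))
                (fun _ => 1 / (2 * (m : ℝ) - 1))) := hHolder
          _ = ENNReal.ofReal _ := ?_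
        rw [Fintype.prod_option]
        simp only [Option.elim]
        rw [← ofReal_integral_eq_lintegral_ofReal hhint (hhpos.mono fun x h => h.le)]
        rw [Finset.prod_congr rfl fun i _ => by
          rw [← ofReal_integral_eq_lintegral_ofReal (hgint i)
            ((hgpos i).mono fun x h => h.le),
            ENNReal.ofReal_rpow_of_pos (hIgpos i)]]
        rw [ENNReal.ofReal_rpow_of_pos hIhpos]
        rw [← ENNReal.ofReal_prod_of_nonneg (fun i _ => Real.rpow_nonneg (hIgpos i).le _)]
        rw [← ENNReal.ofReal_mul (Real.rpow_nonneg hIhpos.le _)]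
      have hC : V ≤ (∫ x in cube c r, (∏ i, w i x ^ ((1 : ℝ) / m))
          ^ (1 - (m : ℝ) / ((m : ℝ) - 1))) ^ (((m : ℝ) - 1) / (2 * (m : ℝ) - 1)) *
          ∏ i, (∫ x in cube c r, w i x ^ ((1 : ℝ) / m)) ^ (1 / (2 * (m : ℝ) - 1)) := by
        refine ENNReal.toReal_le_of_le_ofReal ?_ ?_
        · have h1 : (0:ℝ) ≤ (∫ x in cube c r, (∏ i, w i x ^ ((1 : ℝ) / m))
              ^ (1 - (m : ℝ) / ((m : ℝ) - 1))) ^ (((m : ℝ) - 1) / (2 * (m : ℝ) - 1)) :=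
            Real.rpow_nonneg hIhpos.le _
          have h2 : (0:ℝ) ≤ ∏ i, (∫ x in cube c r, w i x ^ ((1 : ℝ) / m))
              ^ (1 / (2 * (m : ℝ) - 1)) :=
            Finset.prod_nonneg fun i _ => Real.rpow_nonneg (hIgpos i).le _
          exact mul_nonneg h1 h2
        · rw [← hμuniv]
          exact hENN
      -- now pure real arithmetic
      have hB : 0 < (∫ x in cube c r, (∏ i, w i x ^ ((1 : ℝ) / m))
          ^ (1 - (m : ℝ) / ((m : ℝ) - 1))) / V := div_pos hIhpos hV
      have hG : ∀ i, 0 < (∫ x in cube c r, w i x ^ ((1 : ℝ) / m)) / V := fun i =>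
        div_pos (hIgpos i) hV
      have h1le : (1 : ℝ) ≤ ((∫ x in cube c r, (∏ i, w i x ^ ((1 : ℝ) / m))
          ^ (1 - (m : ℝ) / ((m : ℝ) - 1))) / V) ^ (((m : ℝ) - 1) / (2 * (m : ℝ) - 1)) *
          ∏ i, ((∫ x in cube c r, w i x ^ ((1 : ℝ) / m)) / V) ^ (1 / (2 * (m : ℝ) - 1)) := by
        have hCC : V ≤ (((∫ x in cube c r, (∏ i, w i x ^ ((1 : ℝ) / m))
            ^ (1 - (m : ℝ) / ((m : ℝ) - 1))) / V) ^ (((m : ℝ) - 1) / (2 * (m : ℝ) - 1)) *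
            ∏ i, ((∫ x in cube c r, w i x ^ ((1 : ℝ) / m)) / V) ^ (1 / (2 * (m : ℝ) - 1)))
              * V := by
          calc V ≤ (∫ x in cube c r, (∏ i, w i x ^ ((1 : ℝ) / m))
              ^ (1 - (m : ℝ) / ((m : ℝ) - 1))) ^ (((m : ℝ) - 1) / (2 * (m : ℝ) - 1)) *
              ∏ i, (∫ x in cube c r, w i x ^ ((1 : ℝ) / m)) ^ (1 / (2 * (m : ℝ) - 1)) := hC
            _ = (((∫ x in cube c r, (∏ i, w i x ^ ((1 : ℝ) / m))
                ^ (1 - (m : ℝ) / ((m : ℝ) - 1))) / V) * V)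
                  ^ (((m : ℝ) - 1) / (2 * (m : ℝ) - 1)) *
                ∏ i, (((∫ x in cube c r, w i x ^ ((1 : ℝ) / m)) / V) * V)
                  ^ (1 / (2 * (m : ℝ) - 1)) := by
                simp_rw [div_mul_cancel₀ _ hV.ne']
            _ = (((∫ x in cube c r, (∏ i, w i x ^ ((1 : ℝ) / m))
                ^ (1 - (m : ℝ) / ((m : ℝ) - 1))) / V)
                  ^ (((m : ℝ) - 1) / (2 * (m : ℝ) - 1)) * V
                    ^ (((m : ℝ) - 1) / (2 * (m : ℝ) - 1))) *
                ((∏ i, ((∫ x in cube c r, w i x ^ ((1 : ℝ) / m)) / V)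
                  ^ (1 / (2 * (m : ℝ) - 1))) * (V ^ ((1 : ℝ) / (2 * (m : ℝ) - 1))) ^ (m : ℕ))
                := by
                rw [Real.mul_rpow hB.le hV.le]
                congr 1
                calc (∏ i, (((∫ x in cube c r, w i x ^ ((1 : ℝ) / m)) / V) * V)
                    ^ (1 / (2 * (m : ℝ) - 1)))
                    = ∏ i, (((∫ x in cube c r, w i x ^ ((1 : ℝ) / m)) / V)
                        ^ (1 / (2 * (m : ℝ) - 1)) * V ^ ((1:ℝ) / (2 * (m : ℝ) - 1))) := by
                      refine Finset.prod_congr rfl fun i _ => ?_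
                      rw [Real.mul_rpow (hG i).le hV.le]
                  _ = (∏ i, ((∫ x in cube c r, w i x ^ ((1 : ℝ) / m)) / V)
                        ^ (1 / (2 * (m : ℝ) - 1))) *
                      (V ^ ((1:ℝ) / (2 * (m : ℝ) - 1))) ^ (m : ℕ) := by
                      rw [Finset.prod_mul_distrib, Finset.prod_const, Finset.card_univ,
                        Fintype.card_fin]
            _ = (((∫ x in cube c r, (∏ i, w i x ^ ((1 : ℝ) / m))
                ^ (1 - (m : ℝ) / ((m : ℝ) - 1))) / V) ^ (((m : ℝ) - 1) / (2 * (m : ℝ) - 1)) *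
                ∏ i, ((∫ x in cube c r, w i x ^ ((1 : ℝ) / m)) / V)
                  ^ (1 / (2 * (m : ℝ) - 1))) *
                (V ^ (((m : ℝ) - 1) / (2 * (m : ℝ) - 1)) *
                  (V ^ ((1:ℝ) / (2 * (m : ℝ) - 1))) ^ (m : ℕ)) := by ring
            _ = (((∫ x in cube c r, (∏ i, w i x ^ ((1 : ℝ) / m))
                ^ (1 - (m : ℝ) / ((m : ℝ) - 1))) / V) ^ (((m : ℝ) - 1) / (2 * (m : ℝ) - 1)) *
                ∏ i, ((∫ x in cube c r, w i x ^ ((1 : ℝ) / m)) / V)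
                  ^ (1 / (2 * (m : ℝ) - 1))) * V := by
                congr 1
                rw [← Real.rpow_natCast (V ^ ((1:ℝ) / (2 * (m : ℝ) - 1))) m,
                  ← Real.rpow_mul hV.le, ← Real.rpow_add hV]
                rw [show ((m : ℝ) - 1) / (2 * (m : ℝ) - 1) +
                  1 / (2 * (m : ℝ) - 1) * (m : ℝ) = 1 by
                    rw [one_div_mul_eq_div, ← add_div, div_eq_one_iff_eq hqne]; ring]
                exact Real.rpow_one V
        have := hCC
        nlinarith [hV]
      -- raise to the (2m-1)-st power
      have hfinal : (1 : ℝ) ≤ ((∫ x in cube c r, (∏ i, w i x ^ ((1 : ℝ) / m))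
          ^ (1 - (m : ℝ) / ((m : ℝ) - 1))) / V) ^ (m - 1) *
          ∏ i, (∫ x in cube c r, w i x ^ ((1 : ℝ) / m)) / V := by
        have h2 := Real.rpow_le_rpow (by norm_num) h1le hq.le
        rw [Real.one_rpow] at h2
        rw [Real.mul_rpow (Real.rpow_nonneg hB.le _)
          (Finset.prod_nonneg fun i _ => Real.rpow_nonneg (hG i).le _)] at h2
        rw [← Real.rpow_mul hB.le] at h2
        rw [show (((m : ℝ) - 1) / (2 * (m : ℝ) - 1)) * (2 * (m : ℝ) - 1) = (m : ℝ) - 1 by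
          exact div_mul_cancel₀ _ hqne] at h2
        rw [Real.finset_prod_rpow Finset.univ _ (fun i _ => (hG i).le) _] at h2
        rw [← Real.rpow_mul (Finset.prod_nonneg fun i _ => (hG i).le)] at h2
        rw [show (1 / (2 * (m : ℝ) - 1)) * (2 * (m : ℝ) - 1) = 1 by exact one_div_mul_cancel hqne] at h2
        rw [Real.rpow_one] at h2
        rw [show ((∫ x in cube c r, (∏ i, w i x ^ ((1 : ℝ) / m))
            ^ (1 - (m : ℝ) / ((m : ℝ) - 1))) / V) ^ ((m : ℝ) - 1) =
            ((∫ x in cube c r, (∏ i, w i x ^ ((1 : ℝ) / m))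
            ^ (1 - (m : ℝ) / ((m : ℝ) - 1))) / V) ^ (m - 1 : ℕ) by
          rw [← Real.rpow_natCast _ (m - 1), Nat.cast_sub hm, Nat.cast_one]] at h2
        exact h2
      have hA0' : 0 ≤ (∫ x in cube c r, ∏ i, w i x ^ ((1 : ℝ) / m)) / V :=
        div_nonneg (integral_nonneg_of_ae (hvpos.mono fun x hx => hx.le)) hV.le
      calc (∫ x in cube c r, ∏ i, w i x ^ ((1 : ℝ) / m)) / V
          = ((∫ x in cube c r, ∏ i, w i x ^ ((1 : ℝ) / m)) / V) * 1 := (mul_one _).symm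
        _ ≤ ((∫ x in cube c r, ∏ i, w i x ^ ((1 : ℝ) / m)) / V) *
            (((∫ x in cube c r, (∏ i, w i x ^ ((1 : ℝ) / m))
              ^ (1 - (m : ℝ) / ((m : ℝ) - 1))) / V) ^ (m - 1) *
            ∏ i, (∫ x in cube c r, w i x ^ ((1 : ℝ) / m)) / V) :=
            mul_le_mul_of_nonneg_left hfinal hA0'
        _ = (((∫ x in cube c r, ∏ i, w i x ^ ((1 : ℝ) / m)) / V) *
            ((∫ x in cube c r, (∏ i, w i x ^ ((1 : ℝ) / m))
              ^ (1 - (m : ℝ) / ((m : ℝ) - 1))) / V) ^ (m - 1)) *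
            ∏ i, (∫ x in cube c r, w i x ^ ((1 : ℝ) / m)) / V := by ring
        _ ≤ Cv * ∏ i, (∫ x in cube c r, w i x ^ ((1 : ℝ) / m)) / V :=
            mul_le_mul_of_nonneg_right hAmRaw
              (Finset.prod_nonneg fun i _ => (hG i).le)
  -- final assembly
  have hA0 : 0 ≤ (∫ x in cube c r, ∏ i, w i x ^ ((1 : ℝ) / m)) / V := by
    have : 0 ≤ ∫ x in cube c r, ∏ i, w i x ^ ((1 : ℝ) / m) :=
      integral_nonneg_of_ae (hvpos.mono fun x hx => hx.le)
    positivity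
  calc ((∫ x in cube c r, ∏ i, w i x ^ ((1 : ℝ) / m)) / V) ^ m
      ≤ (Cv * ∏ i, (∫ x in cube c r, w i x ^ ((1 : ℝ) / m)) / V) ^ m :=
        pow_le_pow_left₀ hA0 hKEY m
    _ = Cv ^ m * ∏ i, ((∫ x in cube c r, w i x ^ ((1 : ℝ) / m)) / V) ^ m := by
        rw [mul_pow, Finset.prod_pow]
    _ ≤ Cv ^ m * ∏ i, (Ci i * essInf (fun x => w i x ^ ((1 : ℝ) / m)) μ) ^ m := by
        refine mul_le_mul_of_nonneg_left (Finset.prod_le_prod (fun i _ => ?_) (fun i _ => ?_))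
          (by positivity)
        · exact pow_nonneg (div_nonneg (hIgpos i).le hV.le) m
        · refine pow_le_pow_left₀ (div_nonneg (hIgpos i).le hV.le) ?_ m
          rw [div_le_iff₀ hV]
          calc (∫ x in cube c r, w i x ^ ((1 : ℝ) / m)) ≤
              Ci i * V * essInf (fun x => w i x ^ ((1 : ℝ) / m)) μ := hA1' i
            _ = Ci i * essInf (fun x => w i x ^ ((1 : ℝ) / m)) μ * V := by ring
    _ = Cv ^ m * ∏ i, (Ci i ^ m * (essInf (fun x => w i x ^ ((1 : ℝ) / m)) μ) ^ m) := by
        simp_rw [mul_pow]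
    _ = Cv ^ m * ((∏ i, Ci i ^ m) * ∏ i, (essInf (fun x => w i x ^ ((1 : ℝ) / m)) μ) ^ m) := by
        rw [Finset.prod_mul_distrib]
    _ ≤ Cv ^ m * ((∏ i, Ci i ^ m) * ∏ i, essInf (w i) μ) := by
        refine mul_le_mul_of_nonneg_left (mul_le_mul_of_nonneg_left
          (Finset.prod_le_prod (fun i _ => pow_nonneg (hEpos i).le m) (fun i _ => hEw i))
          (Finset.prod_nonneg fun i _ => pow_nonneg (hCi i) m)) (by positivity)
    _ = (Cv ^ m * ∏ i, Ci i ^ m) * ∏ i, essInf (w i) μ := by rw [mul_assoc]
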